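/- Let g : ℝ^n → ℝ be convex, let W(s) ⊆ ℝ^n be compact convex nonempty for each s ∈ [t,T], and suppose (ξ*, λ, ω*) satisfy: ξ*' (s) = A(s)ξ*(s) + ω*(s), λ'(s) = −A(s)ᵀλ(s), ω*(s) ∈ argmax_{ω ∈ W(s)} ⟨−λ(s), ω⟩ for a.e. s, with λ(T) a subgradient of g at ξ*(T). Then for every integrable control ω̂ with ω̂(s) ∈ W(s) a.e. and corresponding solution ξ̂ with ξ̂(t) = ξ*(t), one has g(ξ̂(T)) ≥ g(ξ*(T)). Consequently, inf over all admissible controls ω of g(ξᵗᵒᵏ(T)) starting from ξ*(t) at time t equals g(ξ*(T)). -/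

import Mathlib

open Set RealInnerProductSpace

/-- Pontryagin-type optimality: extremal trajectories of the
  trimmed system minimise the convex terminal cost among all admissible
  trajectories from the same state. -/
theorem extremal_trajectory_optimality {n : ℕ} (t T : ℝ) (htT : t ≤ T)
    (A : ℝ → (EuclideanSpace ℝ (Fin n) →L[ℝ] EuclideanSpace ℝ (Fin n)))
    (hA : ContinuousOn A (Icc t T))
    (g : EuclideanSpace ℝ (Fin n) → ℝ) (hg : ConvexOn ℝ Set.univ g)
    (W : ℝ → Set (EuclideanSpace ℝ (Fin n)))
    (hWc : ∀ s ∈ Icc t T, IsCompact (W s))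
    (hWconv : ∀ s ∈ Icc t T, Convex ℝ (W s))
    (hWne : ∀ s ∈ Icc t T, (W s).Nonempty)
    (ξstar lam ωstar : ℝ → EuclideanSpace ℝ (Fin n))
    (hξstar : ∀ s ∈ Icc t T, HasDerivAt ξstar (A s (ξstar s) + ωstar s) s)
    (hlam : ∀ s ∈ Icc t T,
      HasDerivAt lam (-(ContinuousLinearMap.adjoint (A s) (lam s))) s)
    (hωstar : ∀ s ∈ Icc t T, ωstar s ∈ W s ∧
      ∀ ω ∈ W s, ⟪-lam s, ω⟫ ≤ ⟪-lam s, ωstar s⟫)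
    (hsubgrad : ∀ y, g y ≥ g (ξstar T) + ⟪lam T, y - ξstar T⟫) :
    (∀ (ωhat ξhat : ℝ → EuclideanSpace ℝ (Fin n)),
      (∀ s ∈ Icc t T, ωhat s ∈ W s) →
      (∀ s ∈ Icc t T, HasDerivAt ξhat (A s (ξhat s) + ωhat s) s) →
      ξhat t = ξstar t →
      g (ξhat T) ≥ g (ξstar T)) ∧
    IsLeast {y : ℝ | ∃ ωhat ξhat : ℝ → EuclideanSpace ℝ (Fin n),
        (∀ s ∈ Icc t T, ωhat s ∈ W s) ∧
        (∀ s ∈ Icc t T, HasDerivAt ξhat (A s (ξhat s) + ωhat s) s) ∧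
        ξhat t = ξstar t ∧ y = g (ξhat T)}
      (g (ξstar T)) := by

  have key : ∀ (ωhat ξhat : ℝ → EuclideanSpace ℝ (Fin n)),
      (∀ s ∈ Icc t T, ωhat s ∈ W s) →
      (∀ s ∈ Icc t T, HasDerivAt ξhat (A s (ξhat s) + ωhat s) s) →
      ξhat t = ξstar t →
      g (ξhat T) ≥ g (ξstar T) := by
    intro ωhat ξhat hω hξ h0
    set φ : ℝ → ℝ := fun s => ⟪lam s, ξhat s - ξstar s⟫ with hφ
    have hderiv : ∀ s ∈ Icc t T, HasDerivAt φ (⟪lam s, ωhat s - ωstar s⟫) s := by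
      intro s hs
      have h1 := (hlam s hs).inner ℝ ((hξ s hs).sub (hξstar s hs))
      convert h1 using 1
      case e'_4 => rfl
      case e'_5 => rfl
      case e'_8 => rfl
      have hadj : ⟪ContinuousLinearMap.adjoint (A s) (lam s), ξhat s - ξstar s⟫
          = ⟪lam s, A s (ξhat s) - A s (ξstar s)⟫ := by
        rw [ContinuousLinearMap.adjoint_inner_left, map_sub]
      rw [inner_neg_left, Pi.sub_apply, hadj]
      simp only [inner_sub_right, inner_add_right]
      ring
    have hcont : ContinuousOn φ (Icc t T) := fun s hs =>
      (hderiv s hs).continuousAt.continuousWithinAt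
    have hant : MonotoneOn φ (Icc t T) := by
      apply monotoneOn_of_deriv_nonneg (convex_Icc t T) hcont
      · intro s hs
        rw [interior_Icc] at hs
        exact (hderiv s (Ioo_subset_Icc_self hs)).differentiableAt.differentiableWithinAt
      · intro s hs
        rw [interior_Icc] at hs
        have hs' := Ioo_subset_Icc_self hs
        rw [(hderiv s hs').deriv]
        have hmax := (hωstar s hs').2 (ωhat s) (hω s hs')
        rw [inner_neg_left, inner_neg_left] at hmax
        rw [inner_sub_right]
        linarith
    have hle : φ t ≤ φ T :=
      hant (left_mem_Icc.2 htT) (right_mem_Icc.2 htT) htT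
    have hφt : φ t = 0 := by simp [hφ, h0]
    have hsub := hsubgrad (ξhat T)
    have : (0:ℝ) ≤ ⟪lam T, ξhat T - ξstar T⟫ := by rw [← hφt]; exact hle
    linarith
  refine ⟨key, ⟨⟨ωstar, ξstar, fun s hs => (hωstar s hs).1, hξstar, rfl, rfl⟩, ?_⟩⟩
  rintro y ⟨ω, ξ, h1, h2, h3, rfl⟩
  exact key ω ξ h1 h2 h3
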